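/- arXiv:2101.03831 — 3 statements merged into one kernel-verified Lean document; each statement's English description precedes it below -/
import Mathlib

section
/- Let H be a closed subgroup of a topological group G and let Y be an H-space. If the quotient map G → G/H admits local continuous cross sections, then the quotient map G × Y → G ×_H Y (quotient by the diagonal action h·(g,y) = (gh⁻¹, h·y)) admits local continuous cross sections. -/
/-- A map q : A → B admits local (continuous) cross sections. -/
def HasLocalSections {A B : Type*} [TopologicalSpace A] [TopologicalSpace B]
    (q : A → B) : Prop :=
  ∀ b : B, ∃ (U : Set B) (s : B → A),
    IsOpen U ∧ b ∈ U ∧ ContinuousOn s U ∧ ∀ x ∈ U, q (s x) = x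

/-- Continuity on an open set downstairs can be checked after composing with a quotient map. -/
lemma continuousOn_of_isQuotientMap {A B C : Type*} [TopologicalSpace A] [TopologicalSpace B]
    [TopologicalSpace C] {q : A → B} (hq : Topology.IsQuotientMap q) {V : Set B} (hV : IsOpen V)
    {f : B → C} (hf : Continuous fun a : q ⁻¹' V => f (q a)) : ContinuousOn f V := by
  rw [continuousOn_iff_continuous_restrict]
  rw [(hq.restrictPreimage_isOpen hV).continuous_iff]
  exact hf

/-- If H is a closed subgroup of a topological group G such that G → G/H
admits local continuous cross sections, and Y is an H-space, then the quotient map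
G × Y → G ×_H Y (quotient by the diagonal action h·(g,y) = (gh⁻¹, h·y)) admits local
continuous cross sections. -/
theorem stmt3 {G Y : Type*} [Group G] [TopologicalSpace G] [IsTopologicalGroup G]
    [TopologicalSpace Y] (H : Subgroup G) (hH : IsClosed (H : Set G))
    [MulAction H Y] [ContinuousSMul H Y]
    (hGH : HasLocalSections (QuotientGroup.mk : G → G ⧸ H)) :
    HasLocalSections
      (Quot.mk (fun p q : G × Y => ∃ h : H, q.1 = p.1 * (h : G)⁻¹ ∧ q.2 = h • p.2)) := by
  set r : G × Y → G × Y → Prop :=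
    fun p q => ∃ h : H, q.1 = p.1 * (h : G)⁻¹ ∧ q.2 = h • p.2 with hr
  intro b
  obtain ⟨p₀, rfl⟩ := Quot.exists_rep b
  obtain ⟨U, s, hUopen, hbU, hs, hsec⟩ := hGH (QuotientGroup.mk p₀.1)
  -- the induced map to G/H
  have hFwd : ∀ p q : G × Y, r p q →
      (QuotientGroup.mk p.1 : G ⧸ H) = QuotientGroup.mk q.1 := by
    rintro p q ⟨h, h1, -⟩
    refine (QuotientGroup.eq).2 ?_
    rw [h1]
    simpa using (inv_mem h.2 : (h : G)⁻¹ ∈ H)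
  set F : Quot r → G ⧸ H := Quot.lift (fun p => QuotientGroup.mk p.1) hFwd with hF
  have hFcont : Continuous F :=
    continuous_quot_lift hFwd (continuous_quotient_mk'.comp continuous_fst)
  set V : Set (Quot r) := F ⁻¹' U with hV
  classical
  -- membership of H element
  have hmem : ∀ g : G, (QuotientGroup.mk g : G ⧸ H) ∈ U →
      (s (QuotientGroup.mk g))⁻¹ * g ∈ H := by
    intro g hg
    have := hsec _ hg
    exact (QuotientGroup.eq).1 this
  -- the section as a map on G × Y
  set f : G × Y → G × Y := fun p =>
    if hp : (QuotientGroup.mk p.1 : G ⧸ H) ∈ U then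
      (s (QuotientGroup.mk p.1),
        (⟨(s (QuotientGroup.mk p.1))⁻¹ * p.1, hmem p.1 hp⟩ : H) • p.2)
    else p₀ with hfdef
  have hfinv : ∀ p q : G × Y, r p q → f p = f q := by
    rintro p q hpq
    obtain ⟨h, h1, h2⟩ := hpq
    have hmk : (QuotientGroup.mk p.1 : G ⧸ H) = QuotientGroup.mk q.1 := hFwd p q ⟨h, h1, h2⟩
    by_cases hp : (QuotientGroup.mk p.1 : G ⧸ H) ∈ U
    · have hq : (QuotientGroup.mk q.1 : G ⧸ H) ∈ U := hmk ▸ hp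
      simp only [hfdef, dif_pos hp, dif_pos hq]
      have hss : s (QuotientGroup.mk p.1) = s (QuotientGroup.mk q.1) := by rw [hmk]
      refine Prod.ext (by simp [hss]) ?_
      have hHel : (⟨(s (QuotientGroup.mk q.1))⁻¹ * q.1, hmem q.1 hq⟩ : H)
          = (⟨(s (QuotientGroup.mk p.1))⁻¹ * p.1, hmem p.1 hp⟩ : H) * h⁻¹ := by
        ext
        simp [hss, h1, mul_assoc]
      simp only [hHel, h2, smul_smul]
      congr 1
      group
    · have hq : (QuotientGroup.mk q.1 : G ⧸ H) ∉ U := hmk ▸ hp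
      simp [hfdef, dif_neg hp, dif_neg hq]
  refine ⟨V, Quot.lift f hfinv, hFcont.isOpen_preimage U hUopen, hbU, ?_, ?_⟩
  · -- continuity
    refine continuousOn_of_isQuotientMap isQuotientMap_quot_mk
      (hFcont.isOpen_preimage U hUopen) ?_
    have hmemV : ∀ a : (Quot.mk r) ⁻¹' V, (QuotientGroup.mk (a.1).1 : G ⧸ H) ∈ U := fun a => a.2
    have heq : (fun a : (Quot.mk r) ⁻¹' V => Quot.lift f hfinv (Quot.mk r a.1))
        = fun a : (Quot.mk r) ⁻¹' V =>
          (s (QuotientGroup.mk (a.1).1),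
            (⟨(s (QuotientGroup.mk (a.1).1))⁻¹ * (a.1).1, hmem _ (hmemV a)⟩ : H) • (a.1).2) := by
      funext a
      simp only [Quot.lift_mk, hfdef, dif_pos (hmemV a)]
    rw [heq]
    have hmkc : Continuous fun a : (Quot.mk r) ⁻¹' V =>
        (QuotientGroup.mk (a.1).1 : G ⧸ H) :=
      continuous_quotient_mk'.comp (continuous_fst.comp continuous_subtype_val)
    have hsc : Continuous fun a : (Quot.mk r) ⁻¹' V => s (QuotientGroup.mk (a.1).1) :=
      hs.comp_continuous hmkc hmemV
    have hHc : Continuous fun a : (Quot.mk r) ⁻¹' V =>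
        (⟨(s (QuotientGroup.mk (a.1).1))⁻¹ * (a.1).1, hmem _ (hmemV a)⟩ : H) := by
      apply Continuous.subtype_mk
      exact (hsc.inv).mul (continuous_fst.comp continuous_subtype_val)
    exact hsc.prodMk (hHc.smul (continuous_snd.comp continuous_subtype_val))
  · -- section property
    intro z hz
    induction z using Quot.ind with
    | _ p =>
      have hp : (QuotientGroup.mk p.1 : G ⧸ H) ∈ U := hz
      have : Quot.lift f hfinv (Quot.mk r p) = f p := rfl
      rw [this]
      refine (Quot.sound ?_).symm
      refine ⟨⟨(s (QuotientGroup.mk p.1))⁻¹ * p.1, hmem p.1 hp⟩, ?_, ?_⟩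
      · simp [hfdef, dif_pos hp, mul_assoc]
      · simp [hfdef, dif_pos hp]
end

section
/- Let G be a topological group, H ≤ G a closed subgroup such that G/H admits local cross sections, Y a locally compact Hausdorff H-space, and V a topological vector space. Then the natural map from the space of H-invariant continuous functions C(G × Y, V)^H (with invariance f(gh⁻¹, h·y) = f(g,y)) to C(G ×_H Y, V), both with the compact-open topology, is a homeomorphism. -/
/-- The diagonal H-action relation on G × Y defining the associated bundle G ×_H Y. -/
def assocRel {G : Type*} [Group G] (H : Subgroup G) (Y : Type*) [MulAction H Y] :
    G × Y → G × Y → Prop :=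
  fun p q => ∃ h : H, q.1 = p.1 * (h : G)⁻¹ ∧ q.2 = h • p.2

set_option linter.unusedSectionVars false

section Aux

variable {G Y : Type*} [Group G] [TopologicalSpace G] [IsTopologicalGroup G]
  [TopologicalSpace Y] (H : Subgroup G) [MulAction H Y] [ContinuousSMul H Y]

/-- The homeomorphism of `G × Y` given by the action of `h : H`. -/
def assocTau (h : H) : (G × Y) ≃ₜ (G × Y) where
  toFun p := (p.1 * (h : G)⁻¹, h • p.2)
  invFun p := (p.1 * (h : G), h⁻¹ • p.2)
  left_inv p := by simp [mul_assoc]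
  right_inv p := by simp [mul_assoc]
  continuous_toFun :=
    (continuous_fst.mul continuous_const).prodMk (continuous_snd.const_smul h)
  continuous_invFun :=
    (continuous_fst.mul continuous_const).prodMk (continuous_snd.const_smul h⁻¹)

lemma assocRel_equivalence : Equivalence (assocRel H Y) := by
  constructor
  · intro p; exact ⟨1, by simp⟩
  · rintro p p' ⟨h, h1, h2⟩
    refine ⟨h⁻¹, ?_, ?_⟩
    · simp [h1, mul_assoc]
    · simp [h2]
  · rintro p p' p'' ⟨h, h1, h2⟩ ⟨k, k1, k2⟩
    refine ⟨k * h, ?_, ?_⟩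
    · simp [k1, h1, mul_assoc]
    · simp [k2, h2, mul_smul]

lemma assoc_quotMk_eq_iff (p p' : G × Y) :
    Quot.mk (assocRel H Y) p = Quot.mk (assocRel H Y) p' ↔ assocRel H Y p p' :=
  ⟨fun h => (assocRel_equivalence H).eqvGen_iff.mp (Quot.eqvGen_exact h), Quot.sound⟩

lemma isOpenMap_assoc_quotMk : IsOpenMap (Quot.mk (assocRel H Y)) := by
  intro W hW
  have key : Quot.mk (assocRel H Y) ⁻¹' (Quot.mk (assocRel H Y) '' W)
      = ⋃ h : H, (assocTau H h) '' W := by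
    ext p
    simp only [Set.mem_preimage, Set.mem_image, Set.mem_iUnion]
    constructor
    · rintro ⟨w, hw, hqw⟩
      obtain ⟨h, h1, h2⟩ := (assoc_quotMk_eq_iff H w p).mp hqw
      exact ⟨h, w, hw, (Prod.ext h1 h2).symm⟩
    · rintro ⟨h, w, hw, rfl⟩
      exact ⟨w, hw, ((assoc_quotMk_eq_iff H w _).mpr ⟨h, rfl, rfl⟩)⟩
  have hop : IsOpen (Quot.mk (assocRel H Y) ⁻¹' (Quot.mk (assocRel H Y) '' W)) := by
    rw [key]
    exact isOpen_iUnion fun h => (assocTau H h).isOpenMap _ hW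
  exact hop

lemma isClosed_assocGraph [T2Space Y] (hH : IsClosed (H : Set G)) :
    IsClosed {z : (G × Y) × (G × Y) | assocRel H Y z.1 z.2} := by
  set ψ : (G × Y) × (G × Y) → G := fun z => z.2.1⁻¹ * z.1.1 with hψdef
  have hψ : Continuous ψ := (continuous_snd.fst.inv).mul continuous_fst.fst
  set S : Set ((G × Y) × (G × Y)) := ψ ⁻¹' (H : Set G) with hSdef
  have hS : IsClosed S := hH.preimage hψ
  set Φ : S → Y × Y := fun z => ((⟨ψ z.1, z.2⟩ : H) • z.1.1.2, z.1.2.2) with hΦdef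
  have hΦ : Continuous Φ := by
    apply Continuous.prodMk
    · exact continuous_smul.comp
        (((hψ.comp continuous_subtype_val).subtype_mk _).prodMk
          continuous_subtype_val.fst.snd)
    · exact continuous_subtype_val.snd.snd
  have hset : {z : (G × Y) × (G × Y) | assocRel H Y z.1 z.2}
      = Subtype.val '' (Φ ⁻¹' (Set.diagonal Y)) := by
    ext z
    constructor
    · rintro ⟨h, h1, h2⟩
      have hψz : ψ z = (h : G) := by
        simp [hψdef, h1, mul_assoc]
      have hz : z ∈ S := by
        show ψ z ∈ (H : Set G); rw [hψz]; exact h.2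
      refine ⟨⟨z, hz⟩, ?_, rfl⟩
      show Φ ⟨z, hz⟩ ∈ Set.diagonal Y
      have : (⟨ψ z, hz⟩ : H) = h := Subtype.ext hψz
      simp only [hΦdef, Set.mem_diagonal_iff, this]
      exact h2.symm
    · rintro ⟨⟨z, hz⟩, hdiag, rfl⟩
      refine ⟨⟨ψ z, hz⟩, ?_, ?_⟩
      · simp [hψdef, mul_assoc]
      · exact hdiag.symm
  rw [hset]
  exact (hS.isClosedEmbedding_subtypeVal).isClosedMap _
    (isClosed_diagonal.preimage hΦ)

lemma t2Space_assocQuot [T2Space Y] (hH : IsClosed (H : Set G)) :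
    T2Space (Quot (assocRel H Y)) := by
  rw [t2_iff_isClosed_diagonal]
  have hsurj : Function.Surjective (Quot.mk (assocRel H Y)) := Quot.mk_surjective
  have hq : Topology.IsQuotientMap
      (Prod.map (Quot.mk (assocRel H Y)) (Quot.mk (assocRel H Y))) :=
    ((isOpenMap_assoc_quotMk H).prodMap (isOpenMap_assoc_quotMk H)).isQuotientMap
      (continuous_quot_mk.prodMap continuous_quot_mk) (hsurj.prodMap hsurj)
  rw [← hq.isClosed_preimage]
  have : Prod.map (Quot.mk (assocRel H Y)) (Quot.mk (assocRel H Y))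
      ⁻¹' (Set.diagonal (Quot (assocRel H Y)))
      = {z : (G × Y) × (G × Y) | assocRel H Y z.1 z.2} := by
    ext z
    simp only [Set.mem_preimage, Set.mem_diagonal_iff, Prod.map, Set.mem_setOf_eq]
    exact assoc_quotMk_eq_iff H z.1 z.2
  rw [this]
  exact isClosed_assocGraph H hH

end Aux

/-- Compact sets lift along continuous open surjections with weakly locally compact
domain, provided the compact set is closed. -/
lemma exists_isCompact_image_eq {X Z : Type*} [TopologicalSpace X] [TopologicalSpace Z]
    [WeaklyLocallyCompactSpace X] {q : X → Z} (hq : Continuous q) (ho : IsOpenMap q)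
    (hs : Function.Surjective q) {K : Set Z} (hK : IsCompact K) (hKcl : IsClosed K) :
    ∃ K' : Set X, IsCompact K' ∧ q '' K' = K := by
  choose sec hsec using hs
  choose N hNc hNn using fun x : X => exists_compact_mem_nhds (x := x)
  have cover : K ⊆ ⋃ z : K, q '' interior (N (sec z)) := by
    intro z hz
    exact Set.mem_iUnion.mpr
      ⟨⟨z, hz⟩, ⟨sec z, mem_interior_iff_mem_nhds.mpr (hNn _), hsec z⟩⟩
  obtain ⟨t, ht⟩ := hK.elim_finite_subcover (fun z : K => q '' interior (N (sec z)))
    (fun z => ho _ isOpen_interior) cover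
  refine ⟨(⋃ z ∈ t, N (sec z)) ∩ q ⁻¹' K,
    (t.isCompact_biUnion fun z _ => hNc _).inter_right (hKcl.preimage hq), ?_⟩
  apply subset_antisymm
  · rintro w ⟨x, ⟨-, hx2⟩, rfl⟩
    exact hx2
  · intro w hw
    obtain ⟨i, hit, x, hxi, hqx⟩ := Set.mem_iUnion₂.mp (ht hw)
    exact ⟨x, ⟨Set.mem_biUnion hit (interior_subset hxi),
      Set.mem_preimage.mpr (hqx ▸ hw)⟩, hqx⟩

/-- For G a topological group, H a closed subgroup with G/H admitting local
cross sections, Y a locally compact Hausdorff H-space and V a topological vector space,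
the natural map C(G × Y, V)^H → C(G ×_H Y, V) is a homeomorphism (compact-open
topologies). -/
theorem stmt4 {G Y V : Type*} [Group G] [TopologicalSpace G] [IsTopologicalGroup G]
    [LocallyCompactSpace G] [T2Space G]
    [TopologicalSpace Y] [LocallyCompactSpace Y] [T2Space Y]
    (H : Subgroup G) (hH : IsClosed (H : Set G)) [MulAction H Y] [ContinuousSMul H Y]
    [AddCommGroup V] [Module ℝ V] [TopologicalSpace V] [IsTopologicalAddGroup V]
    [ContinuousSMul ℝ V]
    (hGH : HasLocalSections (QuotientGroup.mk : G → G ⧸ H)) :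
    ∃ e : {f : C(G × Y, V) //
            ∀ (h : H) (g : G) (y : Y), f (g * (h : G)⁻¹, h • y) = f (g, y)} ≃ₜ
          C(Quot (assocRel H Y), V),
      ∀ (f : {f : C(G × Y, V) //
            ∀ (h : H) (g : G) (y : Y), f (g * (h : G)⁻¹, h • y) = f (g, y)})
        (p : G × Y), e f (Quot.mk (assocRel H Y) p) = f.1 p := by
  haveI : T2Space (Quot (assocRel H Y)) := t2Space_assocQuot H hH
  set Inv := {f : C(G × Y, V) //
      ∀ (h : H) (g : G) (y : Y), f (g * (h : G)⁻¹, h • y) = f (g, y)} with hInv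
  set q : C(G × Y, Quot (assocRel H Y)) := ⟨Quot.mk _, continuous_quot_mk⟩ with hq
  have hdesc : ∀ (f : Inv) (p p' : G × Y), assocRel H Y p p' → f.1 p = f.1 p' := by
    rintro f p p' ⟨h, h1, h2⟩
    have hp' : p' = (p.1 * (h : G)⁻¹, h • p.2) := Prod.ext h1 h2
    rw [hp']
    exact (f.2 h p.1 p.2).symm
  let toF : Inv → C(Quot (assocRel H Y), V) := fun f =>
    ⟨Quot.lift f.1 (hdesc f), continuous_quot_lift _ f.1.continuous⟩
  let invF : C(Quot (assocRel H Y), V) → Inv := fun F =>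
    ⟨F.comp q, fun h g y => by
      have hmk : Quot.mk (assocRel H Y) (g * (h : G)⁻¹, h • y)
          = Quot.mk (assocRel H Y) (g, y) := (Quot.sound ⟨h, rfl, rfl⟩).symm
      simp only [ContinuousMap.comp_apply, hq, ContinuousMap.coe_mk, hmk]⟩
  have hcont1 : Continuous toF := by
    rw [ContinuousMap.continuous_compactOpen]
    intro K hK U hU
    obtain ⟨K', hK'c, hK'img⟩ := exists_isCompact_image_eq continuous_quot_mk
      (isOpenMap_assoc_quotMk H) Quot.mk_surjective hK hK.isClosed
    have hset : {f : Inv | Set.MapsTo (toF f) K U}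
        = Subtype.val ⁻¹' {g : C(G × Y, V) | Set.MapsTo g K' U} := by
      ext f
      simp only [Set.mem_setOf_eq, Set.mem_preimage]
      rw [← hK'img, Set.mapsTo_image_iff]
      exact Iff.rfl
    rw [hset]
    exact (ContinuousMap.isOpen_setOf_mapsTo hK'c hU).preimage continuous_subtype_val
  have hcont2 : Continuous invF :=
    Continuous.subtype_mk (ContinuousMap.continuous_precomp q) _
  exact ⟨⟨⟨toF, invF, fun f => Subtype.ext (ContinuousMap.ext fun p => rfl),
    fun F => ContinuousMap.ext fun z => Quot.inductionOn z fun p => rfl⟩, hcont1, hcont2⟩,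
    fun f p => rfl⟩
end

section
/- Let G act on a locally compact space X and let H ≤ G, W an H-module. There is a natural G-equivariant isomorphism ν : C(X, Ind_H^G W) → Ind_H^G C(res_H X, W), arising from the exponential-law homeomorphism C(X, C(G,W)) ≅ C(G, C(X,W)) when X and G are locally compact Hausdorff. -/
/-- The induced module Ind_H^G W: continuous maps f : G → W with f(gh⁻¹) = h·f(g). -/
abbrev IndW {G : Type*} [Group G] [TopologicalSpace G] (H : Subgroup G)
    (W : Type*) [TopologicalSpace W] [SMul H W] : Type _ :=
  {f : C(G, W) // ∀ (h : H) (g : G), f (g * (h : G)⁻¹) = h • f g}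

/-- The induced module Ind_H^G C(res_H X, W): continuous maps F : G → C(X,W) with
F(gh⁻¹) = h·F(g), where H acts on C(X,W) by (h·f)(x) = h·f(h⁻¹·x), the H-action on X
being the restriction of the G-action. -/
abbrev IndCXW {G : Type*} [Group G] [TopologicalSpace G] (H : Subgroup G)
    (X W : Type*) [TopologicalSpace X] [TopologicalSpace W] [MulAction G X]
    [SMul H W] : Type _ :=
  {F : C(G, C(X, W)) //
    ∀ (h : H) (g : G) (x : X), F (g * (h : G)⁻¹) x = h • F g (((h : G)⁻¹ : G) • x)}

section Aux

variable {G X W : Type*} [Group G] [TopologicalSpace G] [IsTopologicalGroup G]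
    [LocallyCompactSpace G] [T2Space G]
    [TopologicalSpace X] [LocallyCompactSpace X] [T2Space X]
    [MulAction G X] [ContinuousSMul G X]
    (H : Subgroup G)
    [AddCommGroup W] [TopologicalSpace W] [IsTopologicalAddGroup W]
    [DistribMulAction H W] [ContinuousSMul H W]

/-- uncurried forward map -/
def fwdAux (Φ : C(X, IndW H W)) : C(G × X, W) :=
  ⟨fun p => (Φ (p.1 • p.2)).1 p.1, by fun_prop⟩

def fwd (Φ : C(X, IndW H W)) : IndCXW H X W :=
  ⟨(fwdAux H Φ).curry, by
    intro h g x
    show (Φ ((g * (h:G)⁻¹) • x)).1 (g * (h:G)⁻¹) = h • (Φ (g • (((h:G)⁻¹ : G) • x))).1 g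
    rw [(Φ _).2 h g, smul_smul]⟩

def bwdAux (F : IndCXW H X W) : C(X × G, W) :=
  ⟨fun p => F.1 p.2 (p.2⁻¹ • p.1), by fun_prop⟩

theorem bwd_prop (F : IndCXW H X W) (x : X) (h : H) (g : G) :
    (bwdAux H F).curry x (g * (h : G)⁻¹) = h • (bwdAux H F).curry x g := by
  show F.1 (g * (h:G)⁻¹) ((g * (h:G)⁻¹)⁻¹ • x) = h • F.1 g (g⁻¹ • x)
  rw [F.2 h g]
  congr 2
  rw [mul_inv_rev, inv_inv, mul_smul, inv_smul_smul]

def bwd (F : IndCXW H X W) : C(X, IndW H W) :=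
  ⟨fun x => ⟨(bwdAux H F).curry x, bwd_prop H F x⟩,
    Continuous.subtype_mk (bwdAux H F).curry.continuous (fun x => bwd_prop H F x)⟩

theorem fwd_continuous : Continuous (fwd (X := X) (W := W) H) := by
  refine Continuous.subtype_mk ?_ _
  refine ContinuousMap.continuous_of_continuous_uncurry _ ?_
  refine ContinuousMap.continuous_of_continuous_uncurry _ ?_
  show Continuous fun q : (C(X, IndW H W) × G) × X => (q.1.1 (q.1.2 • q.2)).1 q.1.2
  fun_prop


set_option linter.unusedSectionVars false in
theorem bwd_continuous : Continuous (bwd (X := X) (W := W) H) := by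
  refine ContinuousMap.continuous_of_continuous_uncurry _ ?_
  refine Continuous.subtype_mk ?_ _
  refine ContinuousMap.continuous_of_continuous_uncurry _ ?_
  show Continuous fun q : (IndCXW H X W × X) × G => q.1.1.1 q.2 (q.2⁻¹ • q.1.2)
  fun_prop

set_option linter.unusedSectionVars false in
theorem bwd_fwd (Φ : C(X, IndW H W)) : bwd H (fwd H Φ) = Φ := by
  ext x g
  show (Φ (g • (g⁻¹ • x))).1 g = (Φ x).1 g
  rw [smul_inv_smul]

set_option linter.unusedSectionVars false in
theorem fwd_bwd (F : IndCXW H X W) : fwd H (bwd H F) = F := by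
  ext g x
  show F.1 g (g⁻¹ • (g • x)) = F.1 g x
  rw [inv_smul_smul]

def expLaw : C(X, IndW H W) ≃ₜ IndCXW H X W where
  toFun := fwd H
  invFun := bwd H
  left_inv := bwd_fwd H
  right_inv := fwd_bwd H
  continuous_toFun := fwd_continuous H
  continuous_invFun := bwd_continuous H

end Aux

/-- For G acting on a locally compact space X, H ≤ G and W an H-module,
there is a natural G-equivariant isomorphism
ν : C(X, Ind_H^G W) → Ind_H^G C(res_H X, W), given by ν(Φ)(g)(x) = Φ(g·x)(g), arising
from the exponential law C(X, C(G,W)) ≅ C(G, C(X,W)). -/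
theorem stmt6 {G X W : Type*} [Group G] [TopologicalSpace G] [IsTopologicalGroup G]
    [LocallyCompactSpace G] [T2Space G]
    [TopologicalSpace X] [LocallyCompactSpace X] [T2Space X]
    [MulAction G X] [ContinuousSMul G X]
    (H : Subgroup G) (hH : IsClosed (H : Set G))
    [AddCommGroup W] [TopologicalSpace W] [IsTopologicalAddGroup W]
    [DistribMulAction H W] [ContinuousSMul H W] :
    ∃ e : C(X, IndW H W) ≃ₜ IndCXW H X W,
      (∀ (Φ : C(X, IndW H W)) (g : G) (x : X), (e Φ).1 g x = (Φ (g • x)).1 g) ∧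
      (∀ (Φ₁ Φ₂ Φ₃ : C(X, IndW H W)),
        (∀ (x : X) (g : G), (Φ₃ x).1 g = (Φ₁ x).1 g + (Φ₂ x).1 g) →
        ∀ (g : G) (x : X), (e Φ₃).1 g x = (e Φ₁).1 g x + (e Φ₂).1 g x) ∧
      (∀ (α : G) (Φ Φα : C(X, IndW H W)),
        (∀ (x : X) (g : G), (Φα x).1 g = (Φ (α⁻¹ • x)).1 (α⁻¹ * g)) →
        ∀ (g : G) (x : X), (e Φα).1 g x = (e Φ).1 (α⁻¹ * g) x) := by
  refine ⟨expLaw H, fun Φ g x => rfl, ?_, ?_⟩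
  · intro Φ₁ Φ₂ Φ₃ hadd g x
    exact hadd (g • x) g
  · intro α Φ Φα hα g x
    show (Φα (g • x)).1 g = (Φ ((α⁻¹ * g) • x)).1 (α⁻¹ * g)
    rw [hα, mul_smul]
end
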